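/- The two-obstacle variational inequality ℰ_α(w̄, w̄) ≤ ℰ_α(w̄, w) for all w ∈ 𝒥 with g ≤ w ≤ h is equivalent, when w̄ = φ̄ − ψ̄, to the pair of inequalities ℰ_α(φ̄, φ̄) ≤ ℰ_α(φ̄, w + ψ̄) and ℰ_α(ψ̄, ψ̄) ≤ ℰ_α(ψ̄, φ̄ − w) for all such w; in particular the pair of one-sided inequalities implies the two-obstacle one. -/
import Mathlib

/-- For w̄ = φ̄ − ψ̄, the two-obstacle variational inequality
ℰ_α(w̄,w̄) ≤ ℰ_α(w̄,w) for w ∈ 𝒥, g ≤ w ≤ h is equivalent to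
ℰ_α(φ̄,φ̄) + ℰ_α(ψ̄,ψ̄) ≤ ℰ_α(φ̄, w+ψ̄) + ℰ_α(ψ̄, φ̄−w); in particular the pair of
one-sided inequalities implies the two-obstacle one. -/
theorem stmt_14 {V : Type*} [AddCommGroup V] [Module ℝ V] [PartialOrder V]
    (E : LinearMap.BilinForm ℝ V)
    (J : Set V) (g h φb ψb wb : V) (hwb : wb = φb - ψb)
    (hpair : ∀ w ∈ J, g ≤ w → w ≤ h →
      E φb φb ≤ E φb (w + ψb) ∧ E ψb ψb ≤ E ψb (φb - w)) :
    (∀ w ∈ J, g ≤ w → w ≤ h →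
      (E wb wb ≤ E wb w ↔ E φb φb + E ψb ψb ≤ E φb (w + ψb) + E ψb (φb - w))) ∧
    (∀ w ∈ J, g ≤ w → w ≤ h → E wb wb ≤ E wb w) := by
  have key : ∀ w : V, (E wb wb ≤ E wb w ↔
      E φb φb + E ψb ψb ≤ E φb (w + ψb) + E ψb (φb - w)) := by
    intro w
    subst hwb
    simp only [map_sub, map_add, LinearMap.sub_apply, LinearMap.add_apply]
    constructor <;> intro <;> linarith
  refine ⟨fun w _ _ _ => key w, fun w hw hg hh => ?_⟩
  obtain ⟨h1, h2⟩ := hpair w hw hg hh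
  exact (key w).mpr (by linarith)
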